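/- arXiv:1703.10839 — 2 statements merged into one kernel-verified Lean document; each statement's English description precedes it below -/
import Mathlib

section
/- Let V be a finite-dimensional real vector space, Q a quadratic form on V, and Z : V → ℂ an ℝ-linear map such that Q is negative definite on ker Z. Then there exist a norm ‖·‖ on V and a constant C > 0 such that every v ∈ V with Q(v) ≥ 0 satisfies |Z(v)| ≥ C·‖v‖. -/
theorem stmt12 (V : Type*) [AddCommGroup V] [Module ℝ V]
    [FiniteDimensional ℝ V] (Q : QuadraticForm ℝ V) (Z : V →ₗ[ℝ] ℂ)
    (hker : ∀ v : V, Z v = 0 → v ≠ 0 → Q v < 0) :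
    ∃ (N : Seminorm ℝ V) (C : ℝ), 0 < C ∧ (∀ v : V, N v = 0 → v = 0) ∧
      ∀ v : V, 0 ≤ Q v → C * N v ≤ ‖Z v‖ := by
  classical
  set n := Module.finrank ℝ V
  let b : Module.Basis (Fin n) ℝ V := Module.finBasis ℝ V
  let W := Fin n → ℝ
  let e : V ≃ₗ[ℝ] W := b.equivFun
  let N : Seminorm ℝ V := (normSeminorm ℝ W).comp e.toLinearMap
  have hN : ∀ v, N v = ‖e v‖ := fun v => rfl
  have hNdef : ∀ v : V, N v = 0 → v = 0 := by
    intro v hv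
    have : e v = 0 := norm_eq_zero.mp (by rw [← hN v]; exact hv)
    simpa using congrArg e.symm this
  -- transported functions
  let f : W → ℝ := fun w => ‖Z (e.symm w)‖
  have hf : Continuous f :=
    continuous_norm.comp (Z.comp (e.symm : W →ₗ[ℝ] V)).continuous_of_finiteDimensional
  let B : V →ₗ[ℝ] V →ₗ[ℝ] ℝ := QuadraticMap.associatedHom ℝ Q
  have hB : ∀ v, B v v = Q v := fun v => QuadraticMap.associated_eq_self_apply ℝ Q v
  let g : W →ₗ[ℝ] (W →L[ℝ] ℝ) :=
    { toFun := fun w => LinearMap.toContinuousLinearMap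
        ((B (e.symm w)).comp (e.symm : W →ₗ[ℝ] V))
      map_add' := by intro x y; ext z; simp
      map_smul' := by intro c x; ext z; simp }
  let q : W → ℝ := fun w => g w w
  have hq : ∀ w, q w = Q (e.symm w) := by
    intro w
    simp only [q, g, LinearMap.coe_mk, AddHom.coe_mk, LinearMap.coe_toContinuousLinearMap',
      LinearMap.comp_apply, LinearEquiv.coe_coe]
    exact hB _
  have hqc : Continuous q := by
    have hg : Continuous g := g.continuous_of_finiteDimensional
    exact isBoundedBilinearMap_apply.continuous.comp (hg.prodMk continuous_id)
  let S : Set W := {w | ‖w‖ = 1 ∧ 0 ≤ q w}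
  have hScompact : IsCompact S := by
    have : S = Metric.sphere (0 : W) 1 ∩ {w | 0 ≤ q w} := by
      ext w; simp [S, Metric.mem_sphere, dist_eq_norm]
    rw [this]
    exact (isCompact_sphere 0 1).inter_right (isClosed_le continuous_const hqc)
  have hfpos : ∀ w ∈ S, 0 < f w := by
    rintro w ⟨hw1, hw2⟩
    rcases (norm_nonneg (Z (e.symm w))).lt_or_eq with h | h
    · exact h
    · exfalso
      have hz : Z (e.symm w) = 0 := norm_eq_zero.mp h.symm
      have hne : e.symm w ≠ 0 := by
        intro h0
        have : w = 0 := by simpa using congrArg e h0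
        rw [this] at hw1; simp at hw1
      have := hker _ hz hne
      rw [← hq w] at this
      linarith
  by_cases hS : S.Nonempty
  · obtain ⟨w₀, hw₀S, hmin⟩ := hScompact.exists_isMinOn hS hf.continuousOn
    refine ⟨N, f w₀, hfpos _ hw₀S, hNdef, ?_⟩
    intro v hv
    by_cases hv0 : v = 0
    · simp [hv0, hN, map_zero]
    · have hev : e v ≠ 0 := fun h => hv0 (by simpa using congrArg e.symm h)
      have hnorm : (0:ℝ) < ‖e v‖ := norm_pos_iff.mpr hev
      set w := ‖e v‖⁻¹ • e v with hw
      have hw1 : ‖w‖ = 1 := by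
        rw [hw, norm_smul, norm_inv, norm_norm, inv_mul_cancel₀ hnorm.ne']
      have hwS : w ∈ S := by
        refine ⟨hw1, ?_⟩
        rw [hq]
        have : e.symm w = ‖e v‖⁻¹ • v := by simp [hw, map_smul]
        rw [this, QuadraticMap.map_smul]
        positivity
      have hle : f w₀ ≤ f w := hmin hwS
      have hfw : f w = ‖e v‖⁻¹ * ‖Z v‖ := by
        simp [f, hw, map_smul, norm_mul, abs_of_pos (inv_pos.mpr hnorm)]
      rw [hfw] at hle
      have := mul_le_mul_of_nonneg_right hle hnorm.le
      rw [hN]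
      calc f w₀ * ‖e v‖ ≤ ‖e v‖⁻¹ * ‖Z v‖ * ‖e v‖ := this
        _ = ‖Z v‖ := by field_simp
  · refine ⟨N, 1, one_pos, hNdef, ?_⟩
    intro v hv
    by_cases hv0 : v = 0
    · simp [hv0, hN, map_zero]
    · exfalso
      apply hS
      have hev : e v ≠ 0 := fun h => hv0 (by simpa using congrArg e.symm h)
      have hnorm : (0:ℝ) < ‖e v‖ := norm_pos_iff.mpr hev
      refine ⟨‖e v‖⁻¹ • e v, ?_, ?_⟩
      · rw [norm_smul, norm_inv, norm_norm, inv_mul_cancel₀ hnorm.ne']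
      · rw [hq]
        have : e.symm (‖e v‖⁻¹ • e v) = ‖e v‖⁻¹ • v := by simp [map_smul]
        rw [this, QuadraticMap.map_smul]
        positivity
end

section
/- Let σ = (A, Z) be a weak stability condition on a triangulated category and E an exceptional object contained in A with Z(E) ≠ 0. Let A₁ ⊂ A be a full abelian subcategory closed under the operations of Lemma on restriction of short exact sequences, and suppose F ∈ A₁ is semistable in A₁ with slope μ(F) ≤ μ(E), where for any quotient F ↠ B in A there are short exact sequences 0 → A → A₁' → E⊗V → 0 and 0 → E⊗V → B → B₁ → 0 with A₁', B₁ ∈ A₁ and V = Hom(E, B). Then F is semistable as an object of A. More generally, any F ∈ A₁ satisfies μ⁻_A(F) ≥ min{μ⁻_{A₁}(F), μ(E)}, where μ⁻ denotes the smallest Harder–Narasimhan slope computed in A and in A₁ respectively. -/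
open CategoryTheory Limits

universe v u

variable {C : Type u} [Category.{v} C] [Abelian C] [HasFiniteBiproducts C]

/-- `μ(z) ≤ μ(w)` for the slope `μ = -Re/Im` (with `μ = +∞` when `Im = 0`),
encoded without division. -/
def slopeLE (z w : ℂ) : Prop := w.re * z.im ≤ z.re * w.im

section Aux

variable (Z : C → ℂ)
    (hZadd : ∀ (X Y : C) (f : X ⟶ Y), Mono f → Z Y = Z X + Z (cokernel f))
    (hZim : ∀ X : C, 0 ≤ (Z X).im)
    (hZre : ∀ X : C, (Z X).im = 0 → (Z X).re ≤ 0)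

include hZadd hZim hZre

lemma Z_isZero (W : C) (hW : IsZero W) : Z W = 0 := by
  have h1 := hZadd W W (𝟙 W) inferInstance
  have hQ : Z (cokernel (𝟙 W)) = 0 := by
    have := h1.symm
    rwa [add_eq_left] at this
  have hf : Mono (0 : W ⟶ cokernel (𝟙 W)) := ⟨fun g h _ => hW.eq_of_tgt g h⟩
  have h2 := hZadd W (cokernel (𝟙 W)) 0 hf
  rw [hQ] at h2
  have h0 : Z W + Z (cokernel (0 : W ⟶ cokernel (𝟙 W))) = 0 := h2.symm
  set W' := cokernel (0 : W ⟶ cokernel (𝟙 W))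
  have him : (Z W).im + (Z W').im = 0 := by
    have := congrArg Complex.im h0; simpa using this
  have hre : (Z W).re + (Z W').re = 0 := by
    have := congrArg Complex.re h0; simpa using this
  have hiW : (Z W).im = 0 := le_antisymm (by have := hZim W'; linarith) (hZim W)
  have hiW' : (Z W').im = 0 := le_antisymm (by have := hZim W; linarith) (hZim W')
  have hrW := hZre W hiW
  have hrW' := hZre W' hiW'
  have : (Z W).re = 0 := le_antisymm hrW (by linarith)
  exact Complex.ext this hiW

lemma Z_iso {X Y : C} (e : X ≅ Y) : Z X = Z Y := by
  have h := hZadd X Y e.hom inferInstance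
  have hz : Z (cokernel e.hom) = 0 :=
    Z_isZero Z hZadd hZim hZre _ ((isZero_zero C).of_iso (cokernel.ofEpi e.hom))
  rw [h, hz, add_zero]

lemma Z_ses {S : ShortComplex C} (hS : S.ShortExact) : Z S.X₂ = Z S.X₁ + Z S.X₃ := by
  have := hS.mono_f
  have := hS.epi_g
  have h := hZadd _ _ S.f hS.mono_f
  have e : cokernel S.f ≅ S.X₃ :=
    IsColimit.coconePointUniqueUpToIso (cokernelIsCokernel S.f) hS.exact.gIsCokernel
  rw [h, Z_iso Z hZadd hZim hZre e]

lemma Z_biprod (E : C) (n : ℕ) : Z (⨁ fun _ : Fin n => E) = (n : ℂ) * Z E := by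
  induction n with
  | zero =>
    have hz : IsZero (⨁ fun _ : Fin 0 => E) := by
      rw [IsZero.iff_id_eq_zero]
      apply biproduct.hom_ext
      intro j; exact j.elim0
    rw [Z_isZero Z hZadd hZim hZre _ hz]; simp
  | succ n ih =>
    have w : biproduct.ι (fun _ : Fin (n+1) => E) 0 ≫
        biproduct.lift (fun j : Fin n => biproduct.π (fun _ : Fin (n+1) => E) j.succ) = 0 := by
      apply biproduct.hom_ext
      intro j
      simp [biproduct.ι_π, (Fin.succ_ne_zero j).symm]
    set S : ShortComplex C := ShortComplex.mk _ _ w with hSdef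
    have spl : S.Splitting := by
      refine ⟨biproduct.π (fun _ : Fin (n+1) => E) 0,
        biproduct.desc (fun j : Fin n => biproduct.ι (fun _ : Fin (n+1) => E) j.succ),
        ?_, ?_, ?_⟩
      · simp [S, hSdef, biproduct.ι_π]
      · apply biproduct.hom_ext'
        intro i
        apply biproduct.hom_ext
        intro j
        simp [S, hSdef, biproduct.ι_π, Fin.succ_inj]
      · apply biproduct.hom_ext'
        intro i
        apply biproduct.hom_ext
        intro j
        induction i using Fin.cases <;> induction j using Fin.cases <;>
          simp [S, hSdef, biproduct.lift_desc, Preadditive.sum_comp, Preadditive.comp_sum,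
            biproduct.ι_π_assoc, biproduct.ι_π, comp_dite, dite_comp,
            Fin.succ_ne_zero, (Fin.succ_ne_zero _).symm, Fin.succ_inj, ite_comp, comp_ite, Finset.sum_ite_eq, Finset.sum_ite_eq']
    have hS : S.ShortExact := spl.shortExact
    have := Z_ses Z hZadd hZim hZre hS
    rw [show S.X₂ = (⨁ fun _ : Fin (n+1) => E) from rfl] at this
    rw [this, show S.X₁ = E from rfl, show S.X₃ = (⨁ fun _ : Fin n => E) from rfl, ih]
    push_cast
    ring

end Aux

/-- Semistability of objects of the heart `A` (here: the abelian category `C`)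
with respect to an exceptional object (Remark 5.12 of the paper): let `Z` be a
weak stability function on `C`, `E ∈ C` with `Z(E) ≠ 0`, and `P` the class of
objects of the full subcategory `A₁`. Assume that for every quotient `F ↠ B`
there are short exact sequences `0 → ker π → A₁' → E⊗V → 0` and
`0 → E⊗V → B → B₁ → 0` with `A₁', B₁ ∈ P` and `V = Hom(E,B)` (of some finite
dimension `n`). Then:
(1) if `F` is semistable in `A₁` with `μ(F) ≤ μ(E)`, it is semistable in `A`;
(2) more generally `μ⁻_A(F) ≥ min{μ⁻_{A₁}(F), μ(E)}`, phrased as: for every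
real `c`, if all nonzero quotients of `F` in `A₁` have slope `≥ c` and
`μ(E) ≥ c`, then all nonzero quotients of `F` in `A` have slope `≥ c`
(`μ(B) ≥ c` is encoded by `c·Im Z(B) ≤ -Re Z(B)`). -/
theorem stmt17 (Z : C → ℂ)
    (hZadd : ∀ (X Y : C) (f : X ⟶ Y), Mono f → Z Y = Z X + Z (cokernel f))
    (hZim : ∀ X : C, 0 ≤ (Z X).im)
    (hZre : ∀ X : C, (Z X).im = 0 → (Z X).re ≤ 0)
    (E : C) (hZE : Z E ≠ 0)
    (P : Set C) (F : C) (hFP : F ∈ P)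
    (hres : ∀ (B : C) (π : F ⟶ B), Epi π →
      ∃ (n : ℕ) (A₁ B₁ : C), A₁ ∈ P ∧ B₁ ∈ P ∧
        (∃ (ι : kernel π ⟶ A₁) (q : A₁ ⟶ ⨁ (fun _ : Fin n => E))
            (w : ι ≫ q = 0), (ShortComplex.mk ι q w).ShortExact) ∧
        (∃ (ι' : (⨁ fun _ : Fin n => E) ⟶ B) (q' : B ⟶ B₁)
            (w' : ι' ≫ q' = 0), (ShortComplex.mk ι' q' w').ShortExact)) :
    ((∀ (B : C) (π : F ⟶ B), Epi π → B ∈ P → ¬ IsZero B →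
        slopeLE (Z F) (Z B)) →
      slopeLE (Z F) (Z E) →
      ∀ (B : C) (π : F ⟶ B), Epi π → ¬ IsZero B → slopeLE (Z F) (Z B)) ∧
    (∀ c : ℝ,
      (∀ (B : C) (π : F ⟶ B), Epi π → B ∈ P → ¬ IsZero B →
        c * (Z B).im ≤ -(Z B).re) →
      c * (Z E).im ≤ -(Z E).re →
      ∀ (B : C) (π : F ⟶ B), Epi π → ¬ IsZero B →
        c * (Z B).im ≤ -(Z B).re) := by
  -- Key decomposition: every quotient B of F satisfies Z B = n • Z E + Z B₁
  -- where B₁ is either zero or a quotient of F lying in P.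
  have key : ∀ (B : C) (π : F ⟶ B), Epi π →
      ∃ (n : ℕ) (B₁ : C), Z B = (n : ℂ) * Z E + Z B₁ ∧
        (Z B₁ = 0 ∨ (B₁ ∈ P ∧ ∃ (π' : F ⟶ B₁), Epi π')) := by
    intro B π hπ
    obtain ⟨n, A₁, B₁, hA₁P, hB₁P, _, ι', q', w', hSE⟩ := hres B π hπ
    refine ⟨n, B₁, ?_, ?_⟩
    · have h := Z_ses Z hZadd hZim hZre hSE
      rw [show (ShortComplex.mk ι' q' w').X₂ = B from rfl] at h
      rw [h, Z_biprod Z hZadd hZim hZre E n]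
    · by_cases hz : IsZero B₁
      · exact Or.inl (Z_isZero Z hZadd hZim hZre _ hz)
      · refine Or.inr ⟨hB₁P, π ≫ q', ?_⟩
        have := hSE.epi_g
        exact epi_comp π q'
  constructor
  · -- part (1)
    intro hss hE B π hπ _
    obtain ⟨n, B₁, hZB, hB₁⟩ := key B π hπ
    have hE' : (Z E).re * (Z F).im ≤ (Z F).re * (Z E).im := hE
    have hB₁' : (Z B₁).re * (Z F).im ≤ (Z F).re * (Z B₁).im := by
      rcases hB₁ with h0 | ⟨hB₁P, π', hπ'⟩
      · rw [h0]; simp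
      · by_cases hz : IsZero B₁
        · rw [Z_isZero Z hZadd hZim hZre _ hz]; simp
        · exact hss B₁ π' hπ' hB₁P hz
    show (Z B).re * (Z F).im ≤ (Z F).re * (Z B).im
    have hre : (Z B).re = (n : ℝ) * (Z E).re + (Z B₁).re := by
      rw [hZB]; simp [Complex.add_re, Complex.mul_re]
    have him : (Z B).im = (n : ℝ) * (Z E).im + (Z B₁).im := by
      rw [hZB]; simp [Complex.add_im, Complex.mul_im]
    have hn : (0:ℝ) ≤ (n:ℝ) := Nat.cast_nonneg n
    rw [hre, him]
    nlinarith [mul_le_mul_of_nonneg_left hE' hn]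
  · -- part (2)
    intro c hss hE B π hπ _
    obtain ⟨n, B₁, hZB, hB₁⟩ := key B π hπ
    have hB₁' : c * (Z B₁).im ≤ -(Z B₁).re := by
      rcases hB₁ with h0 | ⟨hB₁P, π', hπ'⟩
      · rw [h0]; simp
      · by_cases hz : IsZero B₁
        · rw [Z_isZero Z hZadd hZim hZre _ hz]; simp
        · exact hss B₁ π' hπ' hB₁P hz
    have hre : (Z B).re = (n : ℝ) * (Z E).re + (Z B₁).re := by
      rw [hZB]; simp [Complex.add_re, Complex.mul_re]
    have him : (Z B).im = (n : ℝ) * (Z E).im + (Z B₁).im := by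
      rw [hZB]; simp [Complex.add_im, Complex.mul_im]
    have hn : (0:ℝ) ≤ (n:ℝ) := Nat.cast_nonneg n
    rw [hre, him]
    nlinarith [mul_le_mul_of_nonneg_left hE hn]
end
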